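/- Let (Ω, ℱ, P) be a probability space with a filtration (ℱ_τ)_{τ≥0}, let S and A be finite nonempty sets, and let p : S × A → S → ℝ be such that each p(s,a,·) is a probability vector. Let (s_τ)_{τ≥1} and (a_τ)_{τ≥1} be S- and A-valued processes with s_τ and a_τ measurable with respect to ℱ_τ, and suppose that for every τ ≥ 1 and every s' ∈ S, P( s_{τ+1} = s' | ℱ_τ ) = p(s_τ, a_τ, s') almost surely. Let f : S → ℝ, set F := max_s f(s) − min_s f(s), and let T ≥ 1 and δ ∈ (0,1). Then with probability at least 1 − δ, Σ_{τ=1}^{T} ( Σ_{s'} p(s_τ, a_τ, s')·f(s') − f(s_τ) ) ≤ F·√(2·T·log(1/δ)) + F. -/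

import Mathlib

open MeasureTheory


private lemma exp_le_chord {c L y : ℝ} (hc : 0 < c) (hy : |y| ≤ c) :
    Real.exp (L * y) ≤ Real.cosh (L * c) + (Real.sinh (L * c) / c) * y := by
  obtain ⟨hy1, hy2⟩ := abs_le.mp hy
  have ha : 0 ≤ (c - y) / (2 * c) := div_nonneg (by linarith) (by linarith)
  have hb : 0 ≤ (y + c) / (2 * c) := div_nonneg (by linarith) (by linarith)
  have hab : (c - y) / (2 * c) + (y + c) / (2 * c) = 1 := by field_simp; ring
  have h := convexOn_exp.2 (Set.mem_univ (L * (-c))) (Set.mem_univ (L * c)) ha hb hab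
  have harg : ((c - y) / (2 * c)) • (L * (-c)) + ((y + c) / (2 * c)) • (L * c) = L * y := by
    rw [smul_eq_mul, smul_eq_mul, div_mul_eq_mul_div, div_mul_eq_mul_div, ← add_div,
      div_eq_iff (by positivity : (2:ℝ) * c ≠ 0)]
    ring
  rw [harg] at h
  refine h.trans_eq ?_
  rw [smul_eq_mul, smul_eq_mul, Real.cosh_eq, Real.sinh_eq,
    show L * -c = -(L * c) by ring]
  field_simp
  ring

private lemma sum_Icc_telescope (h : ℕ → ℝ) (T : ℕ) :
    ∑ τ ∈ Finset.Icc 1 T, (h (τ + 1) - h τ) = h (T + 1) - h 1 := by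
  induction T with
  | zero => simp
  | succ n ih => rw [Finset.sum_Icc_succ_top (by omega), ih]; ring

/-- Azuma–Hoeffding applied to the telescoping transition terms: for an adapted
state-action process with next-state conditional distribution `p(s_τ, a_τ, ·)`,
with probability at least `1 − δ`,
`Σ_{τ=1}^T ( Σ_{s'} p(s_τ,a_τ,s')·f(s') − f(s_τ) ) ≤ F·√(2T·log(1/δ)) + F`. -/
theorem transition_martingale_bound
    {Ω : Type*} {m0 : MeasurableSpace Ω} (μ : Measure Ω) [IsProbabilityMeasure μ]
    (ℱ : Filtration ℕ m0)
    {S A : Type*} [Fintype S] [Nonempty S] [Fintype A] [Nonempty A]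
    (p : S → A → S → ℝ)
    (hp0 : ∀ s a s', 0 ≤ p s a s') (hp1 : ∀ s a, ∑ s', p s a s' = 1)
    (s : ℕ → Ω → S) (a : ℕ → Ω → A)
    (hs_meas : ∀ τ, 1 ≤ τ → @Measurable Ω S (ℱ τ) ⊤ (s τ))
    (ha_meas : ∀ τ, 1 ≤ τ → @Measurable Ω A (ℱ τ) ⊤ (a τ))
    (htrans : ∀ τ, 1 ≤ τ → ∀ s' : S,
      μ[Set.indicator {ω | s (τ + 1) ω = s'} (1 : Ω → ℝ) | ℱ τ]
        =ᵐ[μ] fun ω => p (s τ ω) (a τ ω) s')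
    (f : S → ℝ) (F : ℝ)
    (hF : F = Finset.univ.sup' Finset.univ_nonempty f
        - Finset.univ.inf' Finset.univ_nonempty f)
    (T : ℕ) (hT : 1 ≤ T) (δ : ℝ) (hδ0 : 0 < δ) (hδ1 : δ < 1) :
    ENNReal.ofReal (1 - δ) ≤
      μ {ω | ∑ τ ∈ Finset.Icc 1 T,
          ((∑ s', p (s τ ω) (a τ ω) s' * f s') - f (s τ ω)) ≤
        F * Real.sqrt (2 * T * Real.log (1 / δ)) + F} := by
  letI : MeasurableSpace S := ⊤
  letI : MeasurableSpace A := ⊤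
  haveI : MeasurableSingletonClass S := ⟨fun _ => MeasurableSpace.measurableSet_top⟩
  haveI : MeasurableSingletonClass A := ⟨fun _ => MeasurableSpace.measurableSet_top⟩
  set M : ℝ := Finset.univ.sup' Finset.univ_nonempty f with hM
  set m : ℝ := Finset.univ.inf' Finset.univ_nonempty f with hm
  have hfM : ∀ x, f x ≤ M := fun x => Finset.le_sup' f (Finset.mem_univ x)
  have hfm : ∀ x, m ≤ f x := fun x => Finset.inf'_le f (Finset.mem_univ x)
  have hF0 : 0 ≤ F := by
    obtain ⟨x⟩ := ‹Nonempty S›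
    rw [hF]; linarith [hfM x, hfm x]
  set g : S → A → ℝ := fun σ α => ∑ s', p σ α s' * f s' with hg
  have hgM : ∀ σ α, g σ α ≤ M := by
    intro σ α
    calc g σ α ≤ ∑ s', p σ α s' * M :=
          Finset.sum_le_sum fun i _ => mul_le_mul_of_nonneg_left (hfM i) (hp0 σ α i)
    _ = M := by rw [← Finset.sum_mul, hp1, one_mul]
  have hgm : ∀ σ α, m ≤ g σ α := by
    intro σ α
    calc m = ∑ s', p σ α s' * m := by rw [← Finset.sum_mul, hp1, one_mul]
    _ ≤ g σ α := Finset.sum_le_sum fun i _ => mul_le_mul_of_nonneg_left (hfm i) (hp0 σ α i)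
  -- trivial case F = 0
  classical
  rcases eq_or_lt_of_le hF0 with hFz | hFpos
  · have hmM : M = m := by linarith [hF ▸ hFz.symm]
    have hevent : {ω | ∑ τ ∈ Finset.Icc 1 T,
          ((∑ s', p (s τ ω) (a τ ω) s' * f s') - f (s τ ω)) ≤
        F * Real.sqrt (2 * T * Real.log (1 / δ)) + F} = Set.univ := by
      refine Set.eq_univ_of_forall fun ω => ?_
      simp only [Set.mem_setOf_eq]
      have hterm : ∀ τ, (∑ s', p (s τ ω) (a τ ω) s' * f s') - f (s τ ω) = 0 := by
        intro τ
        have h1 := hgM (s τ ω) (a τ ω); have h2 := hgm (s τ ω) (a τ ω)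
        have h3 := hfM (s τ ω); have h4 := hfm (s τ ω)
        show g (s τ ω) (a τ ω) - f (s τ ω) = 0
        linarith
      rw [Finset.sum_congr rfl fun τ _ => hterm τ, Finset.sum_const_zero, ← hFz]
      simp
    rw [hevent, measure_univ]
    exact ENNReal.ofReal_le_one.mpr (by linarith)
  -- bounded-integrable helper
  have int_of_bdd : ∀ {h : Ω → ℝ} (C : ℝ), Measurable h → (∀ ω, |h ω| ≤ C) → Integrable h μ := by
    intro h C hmeas hbd
    exact (integrable_const C).mono' hmeas.aestronglyMeasurable
      (Filter.Eventually.of_forall fun ω => by simpa [Real.norm_eq_abs] using hbd ω)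
  set X : ℕ → Ω → ℝ := fun τ ω => g (s τ ω) (a τ ω) - f (s (τ + 1) ω) with hX
  have hXbd : ∀ τ ω, |X τ ω| ≤ F := by
    intro τ ω
    rw [abs_le, hF]
    constructor
    · have := hgm (s τ ω) (a τ ω); have := hfM (s (τ + 1) ω)
      show -(M - m) ≤ g (s τ ω) (a τ ω) - f (s (τ + 1) ω); linarith
    · have := hgM (s τ ω) (a τ ω); have := hfm (s (τ + 1) ω)
      show g (s τ ω) (a τ ω) - f (s (τ + 1) ω) ≤ M - m; linarith
  have hg_meas : ∀ τ, 1 ≤ τ → Measurable[ℱ τ] fun ω => g (s τ ω) (a τ ω) := fun τ hτ =>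
    (measurable_of_countable fun q : S × A => g q.1 q.2).comp
      ((hs_meas τ hτ).prodMk (ha_meas τ hτ))
  have hfs_meas : ∀ τ, 1 ≤ τ → Measurable[ℱ τ] fun ω => f (s τ ω) := fun τ hτ =>
    (measurable_of_countable f).comp (hs_meas τ hτ)
  have hX_measF : ∀ τ, 1 ≤ τ → Measurable[ℱ (τ + 1)] (X τ) := fun τ hτ =>
    ((hg_meas τ hτ).mono (ℱ.mono (Nat.le_succ τ)) le_rfl).sub (hfs_meas (τ + 1) (by omega))
  have hX_meas : ∀ τ, 1 ≤ τ → Measurable (X τ) := fun τ hτ =>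
    (hX_measF τ hτ).mono (ℱ.le _) le_rfl
  have hX_int : ∀ τ, 1 ≤ τ → Integrable (X τ) μ := fun τ hτ =>
    int_of_bdd F (hX_meas τ hτ) (hXbd τ)
  have hg_int : ∀ τ, 1 ≤ τ → Integrable (fun ω => g (s τ ω) (a τ ω)) μ := by
    intro τ hτ
    refine int_of_bdd (|M| + |m|) ((hg_meas τ hτ).mono (ℱ.le τ) le_rfl) fun ω => ?_
    have h1 := hgM (s τ ω) (a τ ω); have h2 := hgm (s τ ω) (a τ ω)
    rw [abs_le]
    constructor
    · have := neg_abs_le m; have := le_abs_self M; have := abs_nonneg M; linarith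
    · have := le_abs_self M; have := abs_nonneg m; linarith
  have hfs_int : ∀ τ, 1 ≤ τ → Integrable (fun ω => f (s τ ω)) μ := by
    intro τ hτ
    refine int_of_bdd (|M| + |m|) ((hfs_meas τ hτ).mono (ℱ.le τ) le_rfl) fun ω => ?_
    have h1 := hfM (s τ ω); have h2 := hfm (s τ ω)
    rw [abs_le]
    constructor
    · have := neg_abs_le m; have := le_abs_self M; have := abs_nonneg M; linarith
    · have := le_abs_self M; have := abs_nonneg m; linarith
  -- E[f(s_{τ+1}) | ℱ τ] = g(s_τ, a_τ)
  have hfnext : ∀ τ, 1 ≤ τ →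
      μ[fun ω => f (s (τ + 1) ω)|ℱ τ] =ᵐ[μ] fun ω => g (s τ ω) (a τ ω) := by
    intro τ hτ
    set H : S → Ω → ℝ := fun s' => f s' • Set.indicator {ω | s (τ + 1) ω = s'} (1 : Ω → ℝ)
      with hH
    have hind_meas : ∀ s' : S, MeasurableSet {ω | s (τ + 1) ω = s'} := by
      intro s'
      exact ((hs_meas (τ + 1) (by omega)).mono (ℱ.le _) le_rfl)
        (MeasurableSpace.measurableSet_top (s := {s'}))
    have hH_int : ∀ s' : S, Integrable (H s') μ := by
      intro s'
      exact ((int_of_bdd 1 (measurable_const.indicator (hind_meas s'))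
        (fun ω => by
          rw [Set.indicator_apply]; split_ifs
          · exact le_of_eq abs_one
          · simp)).smul (f s'))
    have hdecomp : (fun ω => f (s (τ + 1) ω)) = ∑ s' : S, H s' := by
      funext ω
      rw [Finset.sum_apply]
      simp only [hH, Pi.smul_apply, Set.indicator_apply, Set.mem_setOf_eq, smul_eq_mul,
        Pi.one_apply, mul_ite, mul_one, mul_zero]
      rw [Finset.sum_ite_eq Finset.univ (s (τ + 1) ω) f]
      simp
    rw [hdecomp]
    refine (condExp_finsetSum (fun s' _ => hH_int s') _).trans ?_
    have hall : ∀ᵐ ω ∂μ, ∀ s' : S, (μ[H s'|ℱ τ]) ω = f s' * p (s τ ω) (a τ ω) s' := by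
      rw [ae_all_iff]
      intro s'
      have h1 : μ[H s'|ℱ τ] =ᵐ[μ] f s' • μ[Set.indicator {ω | s (τ + 1) ω = s'} (1 : Ω → ℝ)|ℱ τ] :=
        condExp_smul (f s') _ _
      filter_upwards [h1, htrans τ hτ s'] with ω e1 e2
      rw [e1, Pi.smul_apply, e2, smul_eq_mul]
    filter_upwards [hall] with ω hω
    rw [Finset.sum_apply]
    calc ∑ s', (μ[H s'|ℱ τ]) ω = ∑ s', f s' * p (s τ ω) (a τ ω) s' :=
          Finset.sum_congr rfl fun s' _ => hω s'
    _ = g (s τ ω) (a τ ω) := by simp only [hg]; exact Finset.sum_congr rfl fun s' _ => mul_comm _ _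
  -- conditional mean zero
  have hX_czero : ∀ τ, 1 ≤ τ → μ[X τ|ℱ τ] =ᵐ[μ] 0 := by
    intro τ hτ
    have h1 : μ[X τ|ℱ τ] =ᵐ[μ]
        μ[fun ω => g (s τ ω) (a τ ω)|ℱ τ] - μ[fun ω => f (s (τ + 1) ω)|ℱ τ] :=
      condExp_sub (hg_int τ hτ) (hfs_int (τ + 1) (by omega)) _
    have h2 : μ[fun ω => g (s τ ω) (a τ ω)|ℱ τ] =ᵐ[μ] fun ω => g (s τ ω) (a τ ω) := by
      rw [condExp_of_stronglyMeasurable (ℱ.le τ) (hg_meas τ hτ).stronglyMeasurable (hg_int τ hτ)]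
    filter_upwards [h1, h2, hfnext τ hτ] with ω e1 e2 e3
    rw [e1, Pi.sub_apply, e2, e3, sub_self, Pi.zero_apply]
  -- conditional Hoeffding step
  have hexpX_int : ∀ (L : ℝ) τ, 1 ≤ τ → Integrable (fun ω => Real.exp (L * X τ ω)) μ := by
    intro L τ hτ
    refine int_of_bdd (Real.exp (|L| * F)) (Real.measurable_exp.comp ((hX_meas τ hτ).const_mul L))
      fun ω => ?_
    rw [abs_of_nonneg (Real.exp_pos _).le, Real.exp_le_exp]
    calc L * X τ ω ≤ |L * X τ ω| := le_abs_self _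
    _ = |L| * |X τ ω| := abs_mul _ _
    _ ≤ |L| * F := mul_le_mul_of_nonneg_left (hXbd τ ω) (abs_nonneg L)
  have hcond : ∀ (L : ℝ) τ, 1 ≤ τ →
      μ[fun ω => Real.exp (L * X τ ω)|ℱ τ] ≤ᵐ[μ] fun _ => Real.exp (L ^ 2 * F ^ 2 / 2) := by
    intro L τ hτ
    have hch : ∀ ω, Real.exp (L * X τ ω) ≤
        Real.cosh (L * F) + (Real.sinh (L * F) / F) * X τ ω :=
      fun ω => exp_le_chord hFpos (hXbd τ ω)
    have hRHS_int : Integrable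
        ((fun _ => Real.cosh (L * F)) + (Real.sinh (L * F) / F) • X τ) μ :=
      (integrable_const _).add ((hX_int τ hτ).smul _)
    have h1 := condExp_mono (m := (ℱ τ : MeasurableSpace Ω)) (hexpX_int L τ hτ) hRHS_int
      (Filter.Eventually.of_forall fun ω => hch ω)
    have h2 : μ[(fun _ => Real.cosh (L * F)) + (Real.sinh (L * F) / F) • X τ|ℱ τ] =ᵐ[μ]
        (fun _ => Real.cosh (L * F)) + (Real.sinh (L * F) / F) • μ[X τ|ℱ τ] := by
      refine (condExp_add (integrable_const _) ((hX_int τ hτ).smul _) _).trans ?_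
      rw [condExp_const (ℱ.le τ) (Real.cosh (L * F)) (μ := μ)]
      filter_upwards [condExp_smul (μ := μ) (m := ℱ τ) (Real.sinh (L * F) / F) (X τ)] with ω e1
      rw [Pi.add_apply, Pi.add_apply, e1]
    filter_upwards [h1, h2, hX_czero τ hτ] with ω e1 e2 e3
    calc (μ[fun ω => Real.exp (L * X τ ω)|ℱ τ]) ω ≤
        (μ[(fun _ => Real.cosh (L * F)) + (Real.sinh (L * F) / F) • X τ|ℱ τ]) ω := e1
    _ = Real.cosh (L * F) + (Real.sinh (L * F) / F) * (μ[X τ|ℱ τ]) ω := by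
        rw [e2]; simp [Pi.add_apply]
    _ = Real.cosh (L * F) := by rw [e3]; simp
    _ ≤ Real.exp ((L * F) ^ 2 / 2) := Real.cosh_le_exp_half_sq _
    _ = Real.exp (L ^ 2 * F ^ 2 / 2) := by rw [mul_pow]
  -- partial sums
  set Y : ℕ → Ω → ℝ := fun n ω => ∑ τ ∈ Finset.Icc 1 n, X τ ω with hY
  have hY_measF : ∀ n, Measurable[ℱ (n + 1)] (Y n) := by
    intro n
    apply Finset.measurable_sum
    intro τ hτ
    rw [Finset.mem_Icc] at hτ
    exact (hX_measF τ hτ.1).mono (ℱ.mono (by omega)) le_rfl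
  have hY_meas : ∀ n, Measurable (Y n) := fun n => (hY_measF n).mono (ℱ.le _) le_rfl
  have hYbd : ∀ n ω, |Y n ω| ≤ n * F := by
    intro n ω
    calc |Y n ω| ≤ ∑ τ ∈ Finset.Icc 1 n, |X τ ω| := Finset.abs_sum_le_sum_abs _ _
    _ ≤ ∑ τ ∈ Finset.Icc 1 n, F := Finset.sum_le_sum fun τ _ => hXbd τ ω
    _ = n * F := by rw [Finset.sum_const, Nat.card_Icc, nsmul_eq_mul]; norm_num
  have hexpY_int : ∀ (L : ℝ) n, Integrable (fun ω => Real.exp (L * Y n ω)) μ := by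
    intro L n
    refine int_of_bdd (Real.exp (|L| * (n * F)))
      (Real.measurable_exp.comp ((hY_meas n).const_mul L)) fun ω => ?_
    rw [abs_of_nonneg (Real.exp_pos _).le, Real.exp_le_exp]
    calc L * Y n ω ≤ |L * Y n ω| := le_abs_self _
    _ = |L| * |Y n ω| := abs_mul _ _
    _ ≤ |L| * (n * F) := mul_le_mul_of_nonneg_left (hYbd n ω) (abs_nonneg L)
  -- mgf induction
  have hmgf : ∀ (L : ℝ) n, ∫ ω, Real.exp (L * Y n ω) ∂μ ≤ Real.exp (L ^ 2 * F ^ 2 / 2 * n) := by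
    intro L n
    induction n with
    | zero =>
      simp only [hY, Nat.cast_zero, mul_zero, Real.exp_zero]
      have : ∀ ω : Ω, Real.exp (L * ∑ τ ∈ Finset.Icc 1 0, X τ ω) = 1 := by
        intro ω; simp
      rw [integral_congr_ae (Filter.Eventually.of_forall this)]
      simp
    | succ n ih =>
      have hYsucc : ∀ ω, Y (n + 1) ω = Y n ω + X (n + 1) ω := by
        intro ω
        exact Finset.sum_Icc_succ_top (by omega) _
      have hsm : StronglyMeasurable[ℱ (n + 1)] fun ω => Real.exp (L * Y n ω) :=
        (Real.measurable_exp.comp ((hY_measF n).const_mul L)).stronglyMeasurable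
      have hprod_int : Integrable
          ((fun ω => Real.exp (L * Y n ω)) * fun ω => Real.exp (L * X (n + 1) ω)) μ := by
        refine int_of_bdd (Real.exp (|L| * (n * F)) * Real.exp (|L| * F))
          ((Real.measurable_exp.comp ((hY_meas n).const_mul L)).mul
            (Real.measurable_exp.comp ((hX_meas (n + 1) (by omega)).const_mul L))) fun ω => ?_
        rw [Pi.mul_apply, abs_mul, abs_of_nonneg (Real.exp_pos _).le,
          abs_of_nonneg (Real.exp_pos _).le]
        refine mul_le_mul ?_ ?_ (Real.exp_pos _).le (Real.exp_pos _).le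
        · rw [Real.exp_le_exp]
          calc L * Y n ω ≤ |L| * |Y n ω| := (le_abs_self _).trans_eq (abs_mul _ _)
          _ ≤ |L| * (n * F) := mul_le_mul_of_nonneg_left (hYbd n ω) (abs_nonneg L)
        · rw [Real.exp_le_exp]
          calc L * X (n + 1) ω ≤ |L| * |X (n + 1) ω| := (le_abs_self _).trans_eq (abs_mul _ _)
          _ ≤ |L| * F := mul_le_mul_of_nonneg_left (hXbd _ ω) (abs_nonneg L)
      have key : ∫ ω, Real.exp (L * Y (n + 1) ω) ∂μ =
          ∫ ω, Real.exp (L * Y n ω) * Real.exp (L * X (n + 1) ω) ∂μ := by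
        refine integral_congr_ae (Filter.Eventually.of_forall fun ω => ?_)
        simp only [hYsucc, mul_add, Real.exp_add]
      have hpull := condExp_mul_of_stronglyMeasurable_left (μ := μ) hsm hprod_int
        (hexpX_int L (n + 1) (by omega))
      have hint1 : Integrable (fun ω =>
          Real.exp (L * Y n ω) * (μ[fun ω => Real.exp (L * X (n + 1) ω)|ℱ (n + 1)]) ω) μ := by
        refine Integrable.bdd_mul (c := Real.exp (|L| * (n * F))) integrable_condExp
          (Real.measurable_exp.comp ((hY_meas n).const_mul L)).aestronglyMeasurable
          (Filter.Eventually.of_forall fun ω => ?_)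
        rw [Real.norm_eq_abs, abs_of_nonneg (Real.exp_pos _).le, Real.exp_le_exp]
        calc L * Y n ω ≤ |L| * |Y n ω| := (le_abs_self _).trans_eq (abs_mul _ _)
        _ ≤ |L| * (n * F) := mul_le_mul_of_nonneg_left (hYbd n ω) (abs_nonneg L)
      calc ∫ ω, Real.exp (L * Y (n + 1) ω) ∂μ
          = ∫ ω, Real.exp (L * Y n ω) * Real.exp (L * X (n + 1) ω) ∂μ := key
      _ = ∫ ω, (μ[(fun ω => Real.exp (L * Y n ω)) * fun ω => Real.exp (L * X (n + 1) ω)|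
            ℱ (n + 1)]) ω ∂μ := (integral_condExp (ℱ.le (n + 1))).symm
      _ = ∫ ω, Real.exp (L * Y n ω) *
            (μ[fun ω => Real.exp (L * X (n + 1) ω)|ℱ (n + 1)]) ω ∂μ := by
          refine integral_congr_ae ?_
          filter_upwards [hpull] with ω e
          rw [e, Pi.mul_apply]
      _ ≤ ∫ ω, Real.exp (L * Y n ω) * Real.exp (L ^ 2 * F ^ 2 / 2) ∂μ := by
          refine integral_mono_ae hint1 ((hexpY_int L n).mul_const _) ?_
          filter_upwards [hcond L (n + 1) (by omega)] with ω e
          exact mul_le_mul_of_nonneg_left e (Real.exp_pos _).le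
      _ = (∫ ω, Real.exp (L * Y n ω) ∂μ) * Real.exp (L ^ 2 * F ^ 2 / 2) :=
          integral_mul_const _ _
      _ ≤ Real.exp (L ^ 2 * F ^ 2 / 2 * n) * Real.exp (L ^ 2 * F ^ 2 / 2) :=
          mul_le_mul_of_nonneg_right ih (Real.exp_pos _).le
      _ = Real.exp (L ^ 2 * F ^ 2 / 2 * ((n + 1 : ℕ) : ℝ)) := by
          rw [← Real.exp_add]; congr 1; push_cast; ring
  -- Chernoff
  have hTpos : (0 : ℝ) < T := by exact_mod_cast hT
  have hlog : 0 < Real.log (1 / δ) := Real.log_pos (by rw [lt_div_iff₀ hδ0]; linarith)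
  set q : ℝ := Real.sqrt (2 * T * Real.log (1 / δ)) with hq
  have hq0 : 0 < q := Real.sqrt_pos.mpr (by positivity)
  have hq2 : q ^ 2 = 2 * T * Real.log (1 / δ) := Real.sq_sqrt (by positivity)
  set L : ℝ := q / (T * F) with hL
  have hL0 : 0 ≤ L := by positivity
  have hchern := ProbabilityTheory.measure_ge_le_exp_mul_mgf (μ := μ) (X := Y T)
    (F * q) hL0 (hexpY_int L T)
  have hmgfT : ProbabilityTheory.mgf (Y T) μ L ≤ Real.exp (L ^ 2 * F ^ 2 / 2 * T) := hmgf L T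
  have hPA : (μ {ω | F * q ≤ Y T ω}).toReal ≤ δ := by
    refine hchern.trans ?_
    calc Real.exp (-L * (F * q)) * ProbabilityTheory.mgf (Y T) μ L
        ≤ Real.exp (-L * (F * q)) * Real.exp (L ^ 2 * F ^ 2 / 2 * T) :=
          mul_le_mul_of_nonneg_left hmgfT (Real.exp_pos _).le
    _ = Real.exp (-L * (F * q) + L ^ 2 * F ^ 2 / 2 * T) := (Real.exp_add _ _).symm
    _ = δ := by
        have harg : -L * (F * q) + L ^ 2 * F ^ 2 / 2 * T = -Real.log (1 / δ) := by
          have e1 : -L * (F * q) + L ^ 2 * F ^ 2 / 2 * T = -(q ^ 2 / (2 * T)) := by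
            rw [hL]; field_simp; ring
          rw [e1, hq2]
          have hT0 : (T : ℝ) ≠ 0 := ne_of_gt hTpos
          field_simp
        rw [harg, Real.exp_neg, Real.exp_log (by positivity), one_div, inv_inv]
  have hA_meas : MeasurableSet {ω | F * q ≤ Y T ω} :=
    measurableSet_le measurable_const (hY_meas T)
  have hsub : {ω | F * q ≤ Y T ω}ᶜ ⊆ {ω | ∑ τ ∈ Finset.Icc 1 T,
      ((∑ s', p (s τ ω) (a τ ω) s' * f s') - f (s τ ω)) ≤ F * q + F} := by
    intro ω hω
    simp only [Set.mem_compl_iff, Set.mem_setOf_eq, not_le] at hω ⊢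
    have hdecomp : ∑ τ ∈ Finset.Icc 1 T, ((∑ s', p (s τ ω) (a τ ω) s' * f s') - f (s τ ω)) =
        Y T ω + (f (s (T + 1) ω) - f (s 1 ω)) := by
      rw [← sum_Icc_telescope (fun τ => f (s τ ω)) T, hY, ← Finset.sum_add_distrib]
      refine Finset.sum_congr rfl fun τ _ => ?_
      simp only [hX, hg]
      ring
    rw [hdecomp]
    have h3 : f (s (T + 1) ω) - f (s 1 ω) ≤ F := by
      have h1 := hfM (s (T + 1) ω); have h2 := hfm (s 1 ω); rw [hF]; linarith
    linarith
  have hμA : μ {ω | F * q ≤ Y T ω} ≤ ENNReal.ofReal δ := by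
    rw [← ENNReal.ofReal_toReal (measure_ne_top μ _)]
    exact ENNReal.ofReal_le_ofReal hPA
  calc ENNReal.ofReal (1 - δ) = 1 - ENNReal.ofReal δ := by
        rw [ENNReal.ofReal_sub _ hδ0.le, ENNReal.ofReal_one]
  _ ≤ 1 - μ {ω | F * q ≤ Y T ω} := tsub_le_tsub_left hμA 1
  _ = μ {ω | F * q ≤ Y T ω}ᶜ := (prob_compl_eq_one_sub hA_meas).symm
  _ ≤ μ _ := measure_mono hsub
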